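/- Consider the equal-mass case ε = 1, where rosette central configurations are the solutions x > 0 of F(x, 1, μ) = 0. If n = 2 then for every μ > 0 there is exactly one solution. If n ≥ 3, let μ_c(n) = (1/12)·Σ_{k=1}^{n} cos φ_k / sin³(φ_k/2) − n·k_n; then for every μ with 0 < μ < μ_c(n) there are exactly three solutions, and for every μ ≥ μ_c(n) there is exactly one solution. -/

import Mathlib

/-- `k_n = (1/(4n)) · Σ_{k=1}^{n-1} 1/sin(kπ/n)` -/
noncomputable def kn (n : ℕ) : ℝ :=
  (1 / (4 * n)) * ∑ k ∈ Finset.Icc 1 (n - 1), 1 / Real.sin (k * Real.pi / n)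

/-- `φ_k = (2k-1)π/n` -/
noncomputable def phi (n k : ℕ) : ℝ := (2 * (k : ℝ) - 1) * Real.pi / n

/-- The central configuration equation function `F(x, ε, μ)`. -/
noncomputable def F (n : ℕ) (x ε μ : ℝ) : ℝ :=
  μ / n * (1 - x ^ 3) + kn n * (ε - x ^ 3) +
    x ^ 3 / n * ∑ k ∈ Finset.Icc 1 n,
      ((1 - ε) - (1 / x) * (1 - ε * x ^ 2) * Real.cos (phi n k)) /
        (1 + x ^ 2 - 2 * x * Real.cos (phi n k)) ^ ((3 : ℝ) / 2)

/-- `μ_c(n) = (1/12)·Σ_{k=1}^{n} cos φ_k / sin³(φ_k/2) − n·k_n` -/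
noncomputable def muC (n : ℕ) : ℝ :=
  (1 / 12) * ∑ k ∈ Finset.Icc 1 n, Real.cos (phi n k) / Real.sin (phi n k / 2) ^ 3 -
    (n : ℝ) * kn n

namespace Sek

open Real Finset

lemma cos_half (x : ℝ) : Real.cos x = 1 - 2 * Real.sin (x/2)^2 := by
  have h : Real.cos (2 * (x/2)) = 1 - 2 * Real.sin (x/2)^2 := by
    rw [Real.cos_two_mul]
    have := Real.sin_sq_add_cos_sq (x/2)
    linarith
  rw [show 2 * (x/2) = x by ring] at h
  exact h

lemma sin_half_pos {n k : ℕ} (hn : 2 ≤ n) (hk : k ∈ Finset.Icc 1 n) :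
    0 < Real.sin (phi n k / 2) := by
  rw [Finset.mem_Icc] at hk
  have hn0 : (0:ℝ) < n := by exact_mod_cast Nat.lt_of_lt_of_le Nat.zero_lt_two hn
  have hk1 : (1:ℝ) ≤ k := by exact_mod_cast hk.1
  have hkn : (k:ℝ) ≤ n := by exact_mod_cast hk.2
  have h1 : 0 < phi n k / 2 := by
    unfold phi
    have : (0:ℝ) < 2 * k - 1 := by linarith
    positivity
  have h2 : phi n k / 2 < Real.pi := by
    unfold phi
    rw [div_lt_iff₀ (by positivity)]
    have hpi := Real.pi_pos
    have : (2 * (k:ℝ) - 1) < 2 * n := by linarith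
    calc (2 * (k:ℝ) - 1) * Real.pi / n = (2 * (k:ℝ) - 1) * (Real.pi / n) := by ring
    _ < 2 * n * (Real.pi / n) := by
        apply mul_lt_mul_of_pos_right this (by positivity)
    _ = Real.pi * 2 := by field_simp
  exact Real.sin_pos_of_pos_of_lt_pi h1 h2

lemma cos_phi_lt_one {n k : ℕ} (hn : 2 ≤ n) (hk : k ∈ Finset.Icc 1 n) :
    Real.cos (phi n k) < 1 := by
  have h := sin_half_pos hn hk
  have := cos_half (phi n k)
  nlinarith

lemma kn_pos {n : ℕ} (hn : 2 ≤ n) : 0 < kn n := by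
  unfold kn
  have hn0 : (0:ℝ) < n := by exact_mod_cast Nat.lt_of_lt_of_le Nat.zero_lt_two hn
  apply mul_pos (by positivity)
  apply Finset.sum_pos
  · intro k hk
    rw [Finset.mem_Icc] at hk
    have hk1 : (1:ℝ) ≤ k := by exact_mod_cast hk.1
    have hkn : (k:ℝ) ≤ (n:ℝ) - 1 := by
      have : (k:ℝ) ≤ ((n-1 : ℕ) : ℝ) := by exact_mod_cast hk.2
      have h1n : (1:ℕ) ≤ n := le_trans one_le_two hn
      rwa [Nat.cast_sub h1n, Nat.cast_one] at this
    have hpi := Real.pi_pos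
    have hs : 0 < Real.sin (k * Real.pi / n) := by
      apply Real.sin_pos_of_pos_of_lt_pi
      · positivity
      · rw [div_lt_iff₀ hn0]
        nlinarith
    positivity
  · apply Finset.nonempty_of_ne_empty
    simp only [ne_eq, Finset.Icc_eq_empty_iff]
    omega

lemma sum_cos_eq_zero {n : ℕ} (hn : 2 ≤ n) :
    ∑ k ∈ Finset.Icc 1 n, Real.cos (phi n k) = 0 := by
  have hn0 : (0:ℝ) < n := by exact_mod_cast Nat.lt_of_lt_of_le Nat.zero_lt_two hn
  have hpi := Real.pi_pos
  have hs : 0 < Real.sin (Real.pi / n) := by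
    apply Real.sin_pos_of_pos_of_lt_pi (by positivity)
    rw [div_lt_iff₀ hn0]
    have hn2 : (2:ℝ) ≤ n := by exact_mod_cast hn
    nlinarith
  have key : ∀ k : ℕ, Real.cos (phi n (k+1)) =
      (Real.sin (2*(k+1)*Real.pi/n) - Real.sin (2*k*Real.pi/n)) / (2 * Real.sin (Real.pi / n)) := by
    intro k
    rw [Real.sin_sub_sin]
    rw [eq_div_iff (by positivity)]
    rw [show (2*((k:ℝ)+1)*Real.pi/n - 2*k*Real.pi/n)/2 = Real.pi / n by field_simp; ring]
    rw [show (2*((k:ℝ)+1)*Real.pi/n + 2*k*Real.pi/n)/2 = phi n (k+1) by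
      unfold phi; push_cast; field_simp; ring]
    ring
  rw [show Finset.Icc 1 n = Finset.Ico 1 (n+1) by rfl, Finset.sum_Ico_eq_sum_range]
  simp only [Nat.add_sub_cancel, add_comm 1]
  set g : ℕ → ℝ := fun j => Real.sin (2*j*Real.pi/n) / (2 * Real.sin (Real.pi / n)) with hg
  have step1 : ∑ k ∈ Finset.range n, Real.cos (phi n (k+1)) = ∑ k ∈ Finset.range n, (g (k+1) - g k) := by
    apply Finset.sum_congr rfl
    intro k _
    rw [hg]
    simp only
    rw [key k]
    push_cast
    ring
  rw [step1, Finset.sum_range_sub g n, hg]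
  simp only
  rw [show 2*(n:ℝ)*Real.pi/n = 2*Real.pi by field_simp]
  simp [Real.sin_two_pi]


open Real Finset

noncomputable def Dd (x c : ℝ) : ℝ := 1 + x ^ 2 - 2 * x * c

noncomputable def q (x : ℝ) : ℝ := x ^ 2 * (x + 1) / (x ^ 2 + x + 1)

noncomputable def qd (x : ℝ) : ℝ :=
  x * (x ^ 3 + 2 * x ^ 2 + 4 * x + 2) / (x ^ 2 + x + 1) ^ 2

noncomputable def S (n : ℕ) (x : ℝ) : ℝ :=
  ∑ k ∈ Finset.Icc 1 n, Real.cos (phi n k) * (Dd x (Real.cos (phi n k))) ^ (-(3/2) : ℝ)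

noncomputable def H (n : ℕ) (x : ℝ) : ℝ := q x * S n x - n * kn n

noncomputable def psi (x c : ℝ) : ℝ :=
  qd x * (Dd x c) ^ (-(3/2) : ℝ) - 3 * q x * ((x - c) * (Dd x c) ^ (-(5/2) : ℝ))

lemma E_pos (x : ℝ) : 0 < x ^ 2 + x + 1 := by nlinarith [sq_nonneg (x + 1), sq_nonneg x]

lemma q_pos {x : ℝ} (hx : 0 < x) : 0 < q x := by
  unfold q
  have := E_pos x
  positivity

lemma q_zero : q 0 = 0 := by unfold q; norm_num

lemma H_zero (n : ℕ) : H n 0 = -(n * kn n) := by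
  unfold H
  rw [q_zero]
  ring

lemma Dd_pos {x c : ℝ} (hx : 0 ≤ x) (hc1 : -1 ≤ c) (hc2 : c < 1) : 0 < Dd x c := by
  unfold Dd
  rcases hx.eq_or_lt with h | h
  · rw [← h]; norm_num
  · nlinarith [sq_nonneg (1 - x), mul_pos h (sub_pos.mpr hc2)]

lemma Dd_pos' {x c : ℝ} (hx : 0 ≤ x) (hx1 : x < 1) (hc1 : -1 ≤ c) (hc2 : c ≤ 1) :
    0 < Dd x c := by
  unfold Dd
  nlinarith [sq_nonneg (1 - x), mul_nonneg hx (sub_nonneg.mpr hc2)]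

lemma factorization {n : ℕ} (hn : 2 ≤ n) {x : ℝ} (hx : 0 < x) (μ : ℝ) :
    F n x 1 μ = (x - 1) * (x ^ 2 + x + 1) / n * (H n x - μ) := by
  have hn0 : (0:ℝ) < n := by exact_mod_cast Nat.lt_of_lt_of_le Nat.zero_lt_two hn
  unfold F
  have hsum : ∀ k ∈ Finset.Icc 1 n,
      ((1 - 1) - (1 / x) * (1 - 1 * x ^ 2) * Real.cos (phi n k)) /
        (1 + x ^ 2 - 2 * x * Real.cos (phi n k)) ^ ((3 : ℝ) / 2)
      = (-(1/x) * (1 - x^2)) *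
        (Real.cos (phi n k) * (Dd x (Real.cos (phi n k))) ^ (-(3/2) : ℝ)) := by
    intro k hk
    have hD : 0 < Dd x (Real.cos (phi n k)) :=
      Dd_pos hx.le (Real.neg_one_le_cos _) (cos_phi_lt_one hn hk)
    have h1 : (Dd x (Real.cos (phi n k))) ^ (-(3/2) : ℝ)
        = ((Dd x (Real.cos (phi n k))) ^ ((3:ℝ)/2))⁻¹ := by
      rw [show (-(3/2) : ℝ) = -((3:ℝ)/2) by norm_num, Real.rpow_neg hD.le]
    rw [h1]
    unfold Dd
    rw [div_eq_mul_inv]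
    ring
  rw [Finset.sum_congr rfl hsum, ← Finset.mul_sum, ← S]
  unfold H q
  have hE : (x:ℝ)^2 + x + 1 ≠ 0 := (E_pos x).ne'
  field_simp
  ring

lemma H_one {n : ℕ} (hn : 2 ≤ n) : H n 1 = muC n := by
  unfold H muC S
  have hq1 : q 1 = 2/3 := by unfold q; norm_num
  congr 1
  rw [hq1, Finset.mul_sum, Finset.mul_sum]
  apply Finset.sum_congr rfl
  intro k hk
  set s := Real.sin (phi n k / 2) with hs
  have hspos : 0 < s := sin_half_pos hn hk
  have hcos : Real.cos (phi n k) = 1 - 2 * s ^ 2 := cos_half (phi n k)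
  have hDd : Dd 1 (Real.cos (phi n k)) = (2*s)^2 := by
    unfold Dd; rw [hcos]; ring
  have h2s : (0:ℝ) < 2 * s := by linarith
  have hrw : ((2*s)^2 : ℝ) ^ (-(3/2) : ℝ) = ((2*s)^3)⁻¹ := by
    rw [← Real.rpow_natCast (2*s) 2, ← Real.rpow_mul h2s.le]
    rw [show ((2:ℕ):ℝ) * (-(3/2) : ℝ) = -(((3:ℕ):ℝ)) by norm_num]
    rw [Real.rpow_neg h2s.le, Real.rpow_natCast]
  rw [hDd, hrw]
  have h8 : ((2*s)^3 : ℝ) = 8 * s^3 := by ring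
  rw [h8]
  field_simp
  ring

lemma H_symm {n : ℕ} (hn : 2 ≤ n) {x : ℝ} (hx : 0 < x) : H n x⁻¹ = H n x := by
  unfold H S
  congr 1
  rw [Finset.mul_sum, Finset.mul_sum]
  apply Finset.sum_congr rfl
  intro k hk
  set c := Real.cos (phi n k) with hc
  have hc1 : -1 ≤ c := Real.neg_one_le_cos _
  have hc2 : c < 1 := cos_phi_lt_one hn hk
  have hD : 0 < Dd x c := Dd_pos hx.le hc1 hc2
  have hxne : x ≠ 0 := hx.ne'
  have hDinv : Dd x⁻¹ c = Dd x c / x^2 := by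
    unfold Dd; field_simp; ring
  have hq : q x⁻¹ = q x / x^3 := by
    unfold q
    rw [div_div]
    rw [div_eq_div_iff (by positivity) (by positivity)]
    field_simp
    ring
  have hrpow : (Dd x⁻¹ c) ^ (-(3/2) : ℝ) = (Dd x c) ^ (-(3/2) : ℝ) * x^3 := by
    rw [hDinv, Real.div_rpow hD.le (by positivity)]
    have : ((x^2:ℝ)) ^ (-(3/2) : ℝ) = (x^3)⁻¹ := by
      rw [← Real.rpow_natCast x 2, ← Real.rpow_mul hx.le]
      rw [show ((2:ℕ):ℝ) * (-(3/2) : ℝ) = -(((3:ℕ):ℝ)) by norm_num]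
      rw [Real.rpow_neg hx.le, Real.rpow_natCast]
    rw [this]
    field_simp
  rw [hq, hrpow]
  field_simp

lemma hasDerivAt_q (x : ℝ) : HasDerivAt q (qd x) x := by
  have hE : (x:ℝ)^2 + x + 1 ≠ 0 := (E_pos x).ne'
  have hnum : HasDerivAt (fun y : ℝ => y ^ 2 * (y + 1)) (2*x*(x+1) + x^2) x := by
    have h1 : HasDerivAt (fun y : ℝ => y ^ 2) (2*x) x := by
      simpa using hasDerivAt_pow 2 x
    have h2 : HasDerivAt (fun y : ℝ => y + 1) 1 x := (hasDerivAt_id x).add_const 1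
    exact (h1.mul h2).congr_deriv (by ring)
  have hden : HasDerivAt (fun y : ℝ => y ^ 2 + y + 1) (2*x + 1) x := by
    have h1 : HasDerivAt (fun y : ℝ => y ^ 2) (2*x) x := by
      simpa using hasDerivAt_pow 2 x
    simpa using (h1.add (hasDerivAt_id x)).add_const 1
  have := hnum.div hden hE
  refine this.congr_deriv ?_
  unfold qd
  rw [div_eq_div_iff (by positivity) (by positivity)]
  ring

lemma hasDerivAt_Dd (c x : ℝ) : HasDerivAt (fun y => Dd y c) (2*x - 2*c) x := by
  have h1 : HasDerivAt (fun y : ℝ => y ^ 2) (2*x) x := by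
    simpa using hasDerivAt_pow 2 x
  have h2 : HasDerivAt (fun y : ℝ => 2 * y * c) (2*c) x := by
    simpa using ((hasDerivAt_id x).const_mul 2).mul_const c
  have := (h1.const_add 1).sub h2
  exact this

lemma hasDerivAt_H {n : ℕ} (hn : 2 ≤ n) {x : ℝ} (hx : 0 ≤ x) :
    HasDerivAt (H n) (∑ k ∈ Finset.Icc 1 n, Real.cos (phi n k) * psi x (Real.cos (phi n k))) x := by
  have hS : HasDerivAt (S n)
      (∑ k ∈ Finset.Icc 1 n, Real.cos (phi n k) *
        ((2*x - 2*Real.cos (phi n k)) * (-(3/2) : ℝ) *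
          (Dd x (Real.cos (phi n k))) ^ ((-(3/2) : ℝ) - 1))) x := by
    apply HasDerivAt.fun_sum
    intro k hk
    have hD : 0 < Dd x (Real.cos (phi n k)) :=
      Dd_pos hx (Real.neg_one_le_cos _) (cos_phi_lt_one hn hk)
    exact ((hasDerivAt_Dd _ x).rpow_const (Or.inl hD.ne')).const_mul _
  have hmain := ((hasDerivAt_q x).mul hS).sub_const ((n:ℝ) * kn n)
  have heq : H n = fun y => q y * S n y - (n:ℝ) * kn n := by
    funext y; rfl
  rw [heq]
  refine hmain.congr_deriv ?_
  unfold S psi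
  rw [Finset.mul_sum, Finset.mul_sum, ← Finset.sum_add_distrib]
  apply Finset.sum_congr rfl
  intro k hk
  rw [show ((-(3/2) : ℝ) - 1) = (-(5/2) : ℝ) by norm_num]
  ring

lemma hasDerivAt_psi {x : ℝ} (hx0 : 0 ≤ x) (hx1 : x < 1) {c : ℝ} (hc1 : -1 ≤ c) (hc2 : c ≤ 1) :
    HasDerivAt (fun t => psi x t)
      (3 * (Dd x c) ^ (-(7/2) : ℝ) *
        ((x * qd x - (3/2) * q x) * Dd x c + (5/2) * q x * (1 - x^2))) c := by
  have hD : 0 < Dd x c := Dd_pos' hx0 hx1 hc1 hc2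
  have hDc : HasDerivAt (fun t : ℝ => Dd x t) (-(2*x)) c := by
    have h2 : HasDerivAt (fun t : ℝ => 2*x*t) (2*x) c := by
      simpa using (hasDerivAt_id c).const_mul (2*x)
    have := (hasDerivAt_const c (1 + x^2)).sub h2
    unfold Dd
    exact this.congr_deriv (by ring)
  have h1 : HasDerivAt (fun t : ℝ => (Dd x t) ^ (-(3/2) : ℝ))
      ((-(2*x)) * (-(3/2) : ℝ) * (Dd x c) ^ ((-(3/2) : ℝ) - 1)) c :=
    hDc.rpow_const (Or.inl hD.ne')
  have h2 : HasDerivAt (fun t : ℝ => (Dd x t) ^ (-(5/2) : ℝ))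
      ((-(2*x)) * (-(5/2) : ℝ) * (Dd x c) ^ ((-(5/2) : ℝ) - 1)) c :=
    hDc.rpow_const (Or.inl hD.ne')
  have h3 : HasDerivAt (fun t : ℝ => x - t) (-1) c := by
    exact ((hasDerivAt_const c x).sub (hasDerivAt_id c)).congr_deriv (by ring)
  have h4 := h3.mul h2
  have full := (h1.const_mul (qd x)).sub (h4.const_mul (3 * q x))
  have heq : (fun t => psi x t) = fun t =>
      qd x * (Dd x t) ^ (-(3/2) : ℝ) - 3 * q x * ((x - t) * (Dd x t) ^ (-(5/2) : ℝ)) := by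
    funext t; rfl
  rw [heq]
  refine full.congr_deriv ?_
  rw [show ((-(3/2) : ℝ) - 1) = (-(5/2) : ℝ) by norm_num,
    show ((-(5/2) : ℝ) - 1) = (-(7/2) : ℝ) by norm_num]
  rw [show ((-(5/2) : ℝ)) = 1 + (-(7/2) : ℝ) by norm_num, Real.rpow_add hD, Real.rpow_one]
  unfold Dd
  ring

lemma psi_strictMono {x : ℝ} (hx0 : 0 < x) (hx1 : x < 1) :
    StrictMonoOn (psi x) (Set.Icc (-1) 1) := by
  apply strictMonoOn_of_deriv_pos (convex_Icc _ _)
  · intro c hc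
    exact (hasDerivAt_psi hx0.le hx1 hc.1 hc.2).continuousAt.continuousWithinAt
  · intro c hc
    rw [interior_Icc] at hc
    rw [(hasDerivAt_psi hx0.le hx1 hc.1.le hc.2.le).deriv]
    have hD : 0 < Dd x c := Dd_pos' hx0.le hx1 hc.1.le hc.2.le
    have hA : 0 ≤ x * qd x - (3/2) * q x := by
      have hid : x * qd x - (3/2) * q x
          = x^2 * (1-x) * (x^2+3*x+1) / (2*(x^2+x+1)^2) := by
        unfold qd q
        have hE := (E_pos x).ne'
        field_simp
        ring
      rw [hid]
      apply div_nonneg _ (by positivity)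
      apply mul_nonneg (mul_nonneg (sq_nonneg x) (by linarith)) (by nlinarith)
    have hq := q_pos hx0
    have hx2 : 0 < 1 - x^2 := by nlinarith
    have h2 : 0 < (5/2) * q x * (1 - x^2) := by positivity
    have hR : 0 < (Dd x c) ^ (-(7/2) : ℝ) := Real.rpow_pos_of_pos hD _
    have hsum : 0 < (x * qd x - (3/2) * q x) * Dd x c + (5/2) * q x * (1 - x^2) := by
      nlinarith [mul_nonneg hA hD.le]
    positivity

lemma deriv_H_pos {n : ℕ} (hn : 3 ≤ n) {x : ℝ} (hx0 : 0 < x) (hx1 : x < 1) :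
    0 < ∑ k ∈ Finset.Icc 1 n, Real.cos (phi n k) * psi x (Real.cos (phi n k)) := by
  have hn2 : 2 ≤ n := le_trans (by norm_num) hn
  have hmono := psi_strictMono hx0 hx1
  have h0mem : (0:ℝ) ∈ Set.Icc (-1:ℝ) 1 := by norm_num
  have key : ∑ k ∈ Finset.Icc 1 n, Real.cos (phi n k) * psi x (Real.cos (phi n k))
      = ∑ k ∈ Finset.Icc 1 n, Real.cos (phi n k) * (psi x (Real.cos (phi n k)) - psi x 0) := by
    rw [show (∑ k ∈ Finset.Icc 1 n, Real.cos (phi n k) * (psi x (Real.cos (phi n k)) - psi x 0))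
        = ∑ k ∈ Finset.Icc 1 n, (Real.cos (phi n k) * psi x (Real.cos (phi n k))
            - Real.cos (phi n k) * psi x 0) by
      apply Finset.sum_congr rfl; intro k _; ring]
    rw [Finset.sum_sub_distrib, ← Finset.sum_mul, sum_cos_eq_zero hn2]
    ring
  rw [key]
  have hterm : ∀ k ∈ Finset.Icc 1 n,
      0 ≤ Real.cos (phi n k) * (psi x (Real.cos (phi n k)) - psi x 0) := by
    intro k hk
    have hmem : Real.cos (phi n k) ∈ Set.Icc (-1:ℝ) 1 :=
      ⟨Real.neg_one_le_cos _, Real.cos_le_one _⟩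
    rcases lt_trichotomy (Real.cos (phi n k)) 0 with h|h|h
    · have hlt : psi x (Real.cos (phi n k)) < psi x 0 := hmono hmem h0mem h
      nlinarith
    · rw [h]; ring_nf; simp
    · have hlt : psi x 0 < psi x (Real.cos (phi n k)) := hmono h0mem hmem h
      nlinarith
  apply Finset.sum_pos' hterm
  refine ⟨1, Finset.mem_Icc.mpr ⟨le_refl 1, by omega⟩, ?_⟩
  have hphi1 : phi n 1 = Real.pi / n := by
    unfold phi; push_cast; ring
  have hn0 : (0:ℝ) < n := by positivity
  have hc1pos : 0 < Real.cos (phi n 1) := by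
    rw [hphi1]
    apply Real.cos_pos_of_mem_Ioo
    constructor
    · have := Real.pi_pos
      have : 0 < Real.pi / n := by positivity
      linarith [Real.pi_pos]
    · have hpi := Real.pi_pos
      have hn3 : (3:ℝ) ≤ n := by exact_mod_cast hn
      rw [div_lt_div_iff₀ hn0 (by norm_num : (0:ℝ) < 2)]
      nlinarith
  have hmem : Real.cos (phi n 1) ∈ Set.Icc (-1:ℝ) 1 :=
    ⟨Real.neg_one_le_cos _, Real.cos_le_one _⟩
  have hlt : psi x 0 < psi x (Real.cos (phi n 1)) := hmono h0mem hmem hc1pos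
  nlinarith

lemma H_mono {n : ℕ} (hn : 3 ≤ n) : StrictMonoOn (H n) (Set.Icc (0:ℝ) 1) := by
  have hn2 : 2 ≤ n := le_trans (by norm_num) hn
  apply strictMonoOn_of_deriv_pos (convex_Icc _ _)
  · intro y hy
    exact (hasDerivAt_H hn2 hy.1).continuousAt.continuousWithinAt
  · intro y hy
    rw [interior_Icc] at hy
    rw [(hasDerivAt_H hn2 hy.1.le).deriv]
    exact deriv_H_pos hn hy.1 hy.2

lemma H_lt_muC {n : ℕ} (hn : 3 ≤ n) {x : ℝ} (hx : 0 < x) (hne : x ≠ 1) :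
    H n x < muC n := by
  have hn2 : 2 ≤ n := le_trans (by norm_num) hn
  rcases lt_or_gt_of_ne hne with h|h
  · have := H_mono hn (Set.mem_Icc.mpr ⟨hx.le, h.le⟩) (Set.mem_Icc.mpr ⟨by norm_num, le_refl 1⟩) h
    rwa [H_one hn2] at this
  · have hinv0 : 0 < x⁻¹ := by positivity
    have hinv1 : x⁻¹ < 1 := by rw [inv_lt_one₀ (by linarith)]; exact h
    have := H_mono hn (Set.mem_Icc.mpr ⟨hinv0.le, hinv1.le⟩)
      (Set.mem_Icc.mpr ⟨by norm_num, le_refl 1⟩) hinv1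
    rwa [H_one hn2, H_symm hn2 hx] at this

lemma S_two (x : ℝ) : S 2 x = 0 := by
  unfold S
  rw [show Finset.Icc 1 2 = {1, 2} by rfl]
  rw [Finset.sum_insert (by norm_num), Finset.sum_singleton]
  have h1 : Real.cos (phi 2 1) = 0 := by
    rw [show phi 2 1 = Real.pi / 2 by unfold phi; push_cast; ring]
    exact Real.cos_pi_div_two
  have h2 : Real.cos (phi 2 2) = 0 := by
    rw [show phi 2 2 = Real.pi + Real.pi / 2 by unfold phi; push_cast; ring]
    rw [Real.cos_add]
    simp
  rw [h1, h2]
  ring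

theorem sekiguchi' (n : ℕ) (hn : 2 ≤ n) :
    (n = 2 → ∀ μ : ℝ, 0 < μ → {x : ℝ | 0 < x ∧ F n x 1 μ = 0}.encard = 1) ∧
    (3 ≤ n → ∀ μ : ℝ, 0 < μ →
      (μ < muC n → {x : ℝ | 0 < x ∧ F n x 1 μ = 0}.encard = 3) ∧
      (muC n ≤ μ → {x : ℝ | 0 < x ∧ F n x 1 μ = 0}.encard = 1)) := by
  have hn0 : (0:ℝ) < n := by positivity
  have hE : ∀ x : ℝ, 0 < x^2 + x + 1 := E_pos
  constructor
  · -- n = 2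
    rintro rfl μ hμ
    rw [Set.encard_eq_one]
    refine ⟨1, ?_⟩
    ext x
    simp only [Set.mem_setOf_eq, Set.mem_singleton_iff]
    constructor
    · rintro ⟨hx, hF⟩
      rw [factorization hn hx] at hF
      have hH : H 2 x - μ < 0 := by
        unfold H
        rw [S_two]
        have := kn_pos hn
        norm_num
        nlinarith
      rcases mul_eq_zero.mp hF with h | h
      · rcases mul_eq_zero.mp ((div_eq_zero_iff.mp h).resolve_right hn0.ne' :
            (x - 1) * (x^2 + x + 1) = 0) with h' | h'
        · linarith [sub_eq_zero.mp h']
        · exact absurd h' (hE x).ne'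
      · linarith
    · rintro rfl
      refine ⟨by norm_num, ?_⟩
      rw [factorization hn (by norm_num : (0:ℝ) < 1)]
      ring
  · -- n ≥ 3
    intro hn3 μ hμ
    have hknp := kn_pos hn
    have hH0 : H n 0 = -(n * kn n) := H_zero n
    have hH1 : H n 1 = muC n := H_one hn
    have hmono := H_mono hn3
    have hcont : ContinuousOn (H n) (Set.Icc 0 1) := fun y hy =>
      (hasDerivAt_H hn hy.1).continuousAt.continuousWithinAt
    constructor
    · -- 0 < μ < muC n : three solutions
      intro hμc
      have hmem : μ ∈ Set.Ioo (H n 0) (H n 1) := by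
        rw [hH0, hH1]
        constructor
        · nlinarith
        · exact hμc
      obtain ⟨a, ha, hHa⟩ := intermediate_value_Ioo (by norm_num : (0:ℝ) ≤ 1) hcont hmem
      have ha0 : 0 < a := ha.1
      have ha1 : a < 1 := ha.2
      have hainv : 1 < a⁻¹ := (one_lt_inv₀ ha0).mpr ha1
      rw [Set.encard_eq_three]
      refine ⟨a, 1, a⁻¹, by linarith, by nlinarith, by linarith, ?_⟩
      ext x
      simp only [Set.mem_setOf_eq, Set.mem_insert_iff, Set.mem_singleton_iff]
      constructor
      · rintro ⟨hx, hF⟩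
        rw [factorization hn hx] at hF
        rcases mul_eq_zero.mp hF with h | h
        · right; left
          have : (x - 1) * (x^2 + x + 1) = 0 :=
            (div_eq_zero_iff.mp h).resolve_right hn0.ne'
          rcases mul_eq_zero.mp this with h' | h'
          · linarith [sub_eq_zero.mp h']
          · exact absurd h' (hE x).ne'
        · have hHx : H n x = μ := by linarith
          rcases lt_trichotomy x 1 with hx1 | hx1 | hx1
          · left
            exact hmono.injOn (Set.mem_Icc.mpr ⟨hx.le, hx1.le⟩)
              (Set.mem_Icc.mpr ⟨ha0.le, ha1.le⟩) (by rw [hHx, hHa])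
          · right; left; exact hx1
          · right; right
            have hxi0 : 0 < x⁻¹ := by positivity
            have hxi1 : x⁻¹ < 1 := by rw [inv_lt_one₀ (by linarith)]; exact hx1
            have hHxi : H n x⁻¹ = μ := by rw [H_symm hn hx]; exact hHx
            have : x⁻¹ = a := hmono.injOn (Set.mem_Icc.mpr ⟨hxi0.le, hxi1.le⟩)
              (Set.mem_Icc.mpr ⟨ha0.le, ha1.le⟩) (by rw [hHxi, hHa])
            rw [← this, inv_inv]
      · intro hx
        rcases hx with rfl | rfl | rfl
        · refine ⟨ha0, ?_⟩
          rw [factorization hn ha0, hHa, sub_self, mul_zero]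
        · refine ⟨by norm_num, ?_⟩
          rw [factorization hn (by norm_num : (0:ℝ) < 1)]
          ring
        · have hi0 : (0:ℝ) < a⁻¹ := by positivity
          refine ⟨hi0, ?_⟩
          rw [factorization hn hi0, H_symm hn ha0, hHa, sub_self, mul_zero]
    · -- muC n ≤ μ : one solution
      intro hμc
      rw [Set.encard_eq_one]
      refine ⟨1, ?_⟩
      ext x
      simp only [Set.mem_setOf_eq, Set.mem_singleton_iff]
      constructor
      · rintro ⟨hx, hF⟩
        by_contra hne
        rw [factorization hn hx] at hF
        rcases mul_eq_zero.mp hF with h | h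
        · have : (x - 1) * (x^2 + x + 1) = 0 :=
            (div_eq_zero_iff.mp h).resolve_right hn0.ne'
          rcases mul_eq_zero.mp this with h' | h'
          · exact hne (by linarith [sub_eq_zero.mp h'])
          · exact absurd h' (hE x).ne'
        · have := H_lt_muC hn3 hx hne
          linarith
      · rintro rfl
        refine ⟨by norm_num, ?_⟩
        rw [factorization hn (by norm_num : (0:ℝ) < 1)]
        ring

end Sek

/-- Sekiguchi's theorem (equal masses, `ε = 1`): for `n = 2` there is exactly one
rosette central configuration for every `μ > 0`; for `n ≥ 3` there are exactly
three when `0 < μ < μ_c(n)` and exactly one when `μ ≥ μ_c(n)`. -/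
theorem sekiguchi (n : ℕ) (hn : 2 ≤ n) :
    (n = 2 → ∀ μ : ℝ, 0 < μ → {x : ℝ | 0 < x ∧ F n x 1 μ = 0}.encard = 1) ∧
    (3 ≤ n → ∀ μ : ℝ, 0 < μ →
      (μ < muC n → {x : ℝ | 0 < x ∧ F n x 1 μ = 0}.encard = 3) ∧
      (muC n ≤ μ → {x : ℝ | 0 < x ∧ F n x 1 μ = 0}.encard = 1)) :=
  Sek.sekiguchi' n hn
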